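/- Let K/F be a cyclic cubic extension of fields with Gal(K/F) = ⟨σ⟩ and let {1, α₁, α₂} be an F-basis of K. Let a, b, c ∈ F with (a, b, c) ≠ (0, 0, 0), let L be a field extension of K, and suppose x, y, z, w ∈ L with (x, y, z, w) ≠ (0, 0, 0, 0) satisfy: (x + yα₁ + zα₂)(x + yσ(α₁) + zσ(α₂))(x + yσ²(α₁) + zσ²(α₂)) = w³, a(x − w) + by + cz = 0, and x + yα₁ + zα₂ = 0. Then w = 0 and there exists λ ∈ L with (x, y, z) = λ·(cα₁ − bα₂, aα₂ − c, −aα₁ + b). In particular the only zero of the linear form x + yα₁ + zα₂ on the hyperplane section 𝒳_H is the point 𝒪' = [cα₁ − bα₂, aα₂ − c, −aα₁ + b, 0]. -/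

import Mathlib

/-- Let `K/F` be a cyclic cubic extension with `Gal(K/F) = ⟨σ⟩` and `F`-basis
`{1, α₁, α₂}` of `K`. Let `a, b, c ∈ F`, not all zero, and let `L/K` be a field
extension. If `(x, y, z, w) ≠ 0` in `L⁴` satisfies the cubic equation
`(x + yα₁ + zα₂)(x + yσ(α₁) + zσ(α₂))(x + yσ²(α₁) + zσ²(α₂)) = w³`, the hyperplane
equation `a(x − w) + by + cz = 0`, and `x + yα₁ + zα₂ = 0`, then `w = 0` and
`(x, y, z) = λ·(cα₁ − bα₂, aα₂ − c, −aα₁ + b)` for some `λ ∈ L`; i.e. the only zero of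
`x + yα₁ + zα₂` on `𝒳_H` is `𝒪' = [cα₁ − bα₂, aα₂ − c, −aα₁ + b, 0]`. -/
theorem stmt_19 (F K L : Type*) [Field F] [Field K] [Field L]
    [Algebra F K] [Algebra K L] [Algebra F L] [IsScalarTower F K L]
    [IsGalois F K] (hdeg : Module.finrank F K = 3)
    (σ : K ≃ₐ[F] K) (hσ : ∀ τ : K ≃ₐ[F] K, τ ∈ Subgroup.zpowers σ)
    (α₁ α₂ : K) (B : Module.Basis (Fin 3) F K) (hB0 : B 0 = 1) (hB1 : B 1 = α₁) (hB2 : B 2 = α₂)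
    (a b c : F) (habc : ¬ (a = 0 ∧ b = 0 ∧ c = 0))
    (x y z w : L) (hxyzw : ¬ (x = 0 ∧ y = 0 ∧ z = 0 ∧ w = 0))
    (hcubic : (x + y * algebraMap K L α₁ + z * algebraMap K L α₂) *
        (x + y * algebraMap K L (σ α₁) + z * algebraMap K L (σ α₂)) *
        (x + y * algebraMap K L (σ (σ α₁)) + z * algebraMap K L (σ (σ α₂))) = w ^ 3)
    (hplane : algebraMap F L a * (x - w) + algebraMap F L b * y + algebraMap F L c * z = 0)
    (hzero : x + y * algebraMap K L α₁ + z * algebraMap K L α₂ = 0) :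
    w = 0 ∧ ∃ lam : L,
      x = lam * algebraMap K L (c • α₁ - b • α₂) ∧
      y = lam * algebraMap K L (a • α₂ - algebraMap F K c) ∧
      z = lam * algebraMap K L (-(a • α₁) + algebraMap F K b) := by

  have hw : w = 0 := by
    have h3 : w ^ 3 = 0 := by rw [← hcubic, hzero]; ring
    exact pow_eq_zero_iff (by norm_num) |>.mp h3
  subst hw
  refine ⟨rfl, ?_⟩
  have hfa : ∀ t : F, algebraMap F L t = algebraMap K L (algebraMap F K t) :=
    fun t => IsScalarTower.algebraMap_apply F K L t
  set A₁ := algebraMap K L α₁ with hA₁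
  set A₂ := algebraMap K L α₂ with hA₂
  set a' := algebraMap K L (algebraMap F K a) with ha'
  set b' := algebraMap K L (algebraMap F K b) with hb'
  set c' := algebraMap K L (algebraMap F K c) with hc'
  have hplane' : a' * x + b' * y + c' * z = 0 := by
    rw [hfa a, hfa b, hfa c] at hplane
    linear_combination hplane
  have key : y * (b' - a' * A₁) = z * (a' * A₂ - c') := by
    linear_combination hplane' - a' * hzero
  have hsm : ∀ (t : F) (k : K), algebraMap K L (t • k) = algebraMap K L (algebraMap F K t) * algebraMap K L k := by
    intro t k
    rw [Algebra.smul_def, map_mul]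
  by_cases h : a • α₂ - algebraMap F K c = 0
  · -- then a = 0 and c = 0
    have heq : a • B 2 = c • B 0 := by
      rw [hB2, hB0, ← Algebra.algebraMap_eq_smul_one]
      exact sub_eq_zero.mp h
    have ha0 : a = 0 := by
      have := congrArg (fun k => B.repr k 2) heq
      simpa [B.repr_self, Finsupp.single_apply] using this
    have hc0 : c = 0 := by
      have := congrArg (fun k => B.repr k 0) heq
      simpa [B.repr_self, Finsupp.single_apply, eq_comm] using this
    have hb0 : b ≠ 0 := fun hb => habc ⟨ha0, hb, hc0⟩
    have hb'0 : b' ≠ 0 := by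
      rw [hb', ← hfa]
      simpa using hb0
    have ha'0 : a' = 0 := by rw [ha', ha0]; simp
    have hc'0 : c' = 0 := by rw [hc', hc0]; simp
    have hy0 : y = 0 := by
      have hyb : y * b' = 0 := by linear_combination key + (y * A₁ + z * A₂) * ha'0 - z * hc'0
      exact (mul_eq_zero.mp hyb).resolve_right hb'0
    have hx : x = -(z * A₂) := by linear_combination hzero - A₁ * hy0
    refine ⟨z / b', ?_, ?_, ?_⟩
    · rw [map_sub, hsm, hsm, ← hA₁, ← hA₂, ← hc', ← hb', hx, hc'0]
      field_simp
      ring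
    · rw [map_sub, hsm, ← hA₂, ← ha', ← hc', hy0, ha'0, hc'0]; ring
    · rw [map_add, map_neg, hsm, ← hA₁, ← ha', ← hb', ha'0]
      field_simp
      ring
  · -- vy ≠ 0
    have hvy : algebraMap K L (a • α₂ - algebraMap F K c) ≠ 0 := fun h0 =>
      h ((algebraMap K L).injective (by simpa using h0))
    have hvyL : algebraMap K L (a • α₂ - algebraMap F K c) = a' * A₂ - c' := by
      rw [map_sub, hsm]
    refine ⟨y / (a' * A₂ - c'), ?_, ?_, ?_⟩
    · rw [map_sub, hsm, hsm, ← hA₁, ← hA₂, ← hc', ← hb']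
      rw [hvyL] at hvy
      field_simp
      linear_combination (a' * A₂ - c') * hzero + A₂ * key
    · rw [hvyL]
      rw [hvyL] at hvy
      field_simp
    · rw [map_add, map_neg, hsm, ← hA₁, ← ha', ← hb']
      rw [hvyL] at hvy
      field_simp
      linear_combination -key
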